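/- Let A be a k-linear Hopf category with object class X, and let M be a Hopf module over A. Then for all x, y ∈ X and all m ∈ M_{x,y}, the element m_[0] S_{x,y}(m_[1]) of M_{x,x} is a coinvariant: ρ_{x,x}(m_[0] S_{x,y}(m_[1])) = m_[0] S_{x,y}(m_[1]) ⊗ 1_x. -/

import Mathlib

open TensorProduct
open TensorProduct

namespace HopfAux
variable {k : Type*} [CommRing k]
variable {P P' Q Q' R R' C W Y Z : Type*}
  [AddCommGroup P] [Module k P] [AddCommGroup P'] [Module k P']
  [AddCommGroup Q] [Module k Q] [AddCommGroup Q'] [Module k Q']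
  [AddCommGroup R] [Module k R] [AddCommGroup R'] [Module k R']
  [AddCommGroup C] [Module k C] [AddCommGroup W] [Module k W]
  [AddCommGroup Y] [Module k Y] [AddCommGroup Z] [Module k Z]

noncomputable def tmap (f : P →ₗ[k] Q →ₗ[k] R) (g : P' →ₗ[k] Q' →ₗ[k] R') :
    (P ⊗[k] P') ⊗[k] (Q ⊗[k] Q') →ₗ[k] R ⊗[k] R' :=
  (TensorProduct.map (TensorProduct.lift f) (TensorProduct.lift g)).comp
    (tensorTensorTensorComm k P P' Q Q').toLinearMap

@[simp] lemma tmap_tmul (f : P →ₗ[k] Q →ₗ[k] R) (g : P' →ₗ[k] Q' →ₗ[k] R')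
    (p : P) (p' : P') (q : Q) (q' : Q') :
    tmap f g ((p ⊗ₜ[k] p') ⊗ₜ[k] (q ⊗ₜ[k] q')) = f p q ⊗ₜ[k] g p' q' := by
  simp [tmap]

noncomputable def twr (mu : P →ₗ[k] Q' →ₗ[k] R) (s : Q →ₗ[k] Q') :
    P ⊗[k] Q →ₗ[k] R :=
  (TensorProduct.lift mu) ∘ₗ (TensorProduct.map LinearMap.id s)

@[simp] lemma twr_tmul (mu : P →ₗ[k] Q' →ₗ[k] R) (s : Q →ₗ[k] Q') (p : P) (q : Q) :
    twr mu s (p ⊗ₜ[k] q) = mu p (s q) := by simp [twr]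

noncomputable def twl (s : P →ₗ[k] P') (mu : P' →ₗ[k] Q →ₗ[k] R) :
    P ⊗[k] Q →ₗ[k] R :=
  (TensorProduct.lift mu) ∘ₗ (TensorProduct.map s LinearMap.id)

@[simp] lemma twl_tmul (s : P →ₗ[k] P') (mu : P' →ₗ[k] Q →ₗ[k] R) (p : P) (q : Q) :
    twl s mu (p ⊗ₜ[k] q) = mu (s p) q := by simp [twl]

noncomputable def theta' (f : P ⊗[k] C →ₗ[k] Z) (g : W →ₗ[k] Y) :
    P ⊗[k] (W ⊗[k] C) →ₗ[k] Z ⊗[k] Y :=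
  (TensorProduct.map f g) ∘ₗ ((TensorProduct.assoc k P C W).symm.toLinearMap) ∘ₗ
    (TensorProduct.map LinearMap.id (TensorProduct.comm k W C).toLinearMap)

@[simp] lemma theta'_tmul (f : P ⊗[k] C →ₗ[k] Z) (g : W →ₗ[k] Y) (p : P) (u : W) (c : C) :
    theta' f g (p ⊗ₜ[k] (u ⊗ₜ[k] c)) = f (p ⊗ₜ[k] c) ⊗ₜ[k] g u := by
  simp [theta']

noncomputable def theta (g : W →ₗ[k] Y) (f : P ⊗[k] C →ₗ[k] Z) :
    P ⊗[k] (W ⊗[k] C) →ₗ[k] Y ⊗[k] Z :=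
  (TensorProduct.comm k Z Y).toLinearMap ∘ₗ theta' f g

@[simp] lemma theta_tmul (g : W →ₗ[k] Y) (f : P ⊗[k] C →ₗ[k] Z) (p : P) (u : W) (c : C) :
    theta g f (p ⊗ₜ[k] (u ⊗ₜ[k] c)) = g u ⊗ₜ[k] f (p ⊗ₜ[k] c) := by
  simp [theta]

lemma map_assoc_symm (f : R →ₗ[k] R') (t : P ⊗[k] (Q ⊗[k] R)) :
    TensorProduct.map LinearMap.id f ((TensorProduct.assoc k P Q R).symm t)
      = (TensorProduct.assoc k P Q R').symm
          (TensorProduct.map LinearMap.id (TensorProduct.map LinearMap.id f) t) := by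
  induction t using TensorProduct.induction_on with
  | zero => simp
  | tmul p w =>
      induction w using TensorProduct.induction_on with
      | zero => simp
      | tmul q r => simp
      | add w1 w2 h1 h2 => simp only [tmul_add, map_add, h1, h2]
  | add t1 t2 h1 h2 => simp only [map_add, h1, h2]

lemma map_map (f : P →ₗ[k] Q) (g : P' →ₗ[k] Q') (f' : Q →ₗ[k] R) (g' : Q' →ₗ[k] R')
    (t : P ⊗[k] P') :
    TensorProduct.map f' g' (TensorProduct.map f g t)
      = TensorProduct.map (f'.comp f) (g'.comp g) t := by
  rw [TensorProduct.map_comp]; rfl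

end HopfAux

namespace HopfCat
open HopfAux
variable {k : Type*} [CommRing k] {X : Type*}
variable (A : X → X → Type*)
  [∀ x y, AddCommGroup (A x y)] [∀ x y, Module k (A x y)]
  (Δ : ∀ x y, A x y →ₗ[k] A x y ⊗[k] A x y)
  (ε : ∀ x y, A x y →ₗ[k] k)
  (mul : ∀ x y z, A x y →ₗ[k] A y z →ₗ[k] A x z)
  (one : ∀ x, A x x)
  (S : ∀ x y, A x y →ₗ[k] A y x)

lemma unit_right (x y : X)
    (mul_one' : ∀ x y (a : A x y), mul x y y a (one y) = a)
    (u : A y x ⊗[k] A y x) :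
    tmap (mul y x x) (mul y x x) (u ⊗ₜ[k] (one x ⊗ₜ[k] one x)) = u := by
  induction u using TensorProduct.induction_on with
  | zero => simp
  | tmul a b => simp [mul_one']
  | add u1 u2 h1 h2 => simp only [add_tmul, map_add, h1, h2]

lemma unit_left (x y : X)
    (one_mul' : ∀ x y (a : A x y), mul x x y (one x) a = a)
    (u : A y x ⊗[k] A y x) :
    tmap (mul y y x) (mul y y x) ((one y ⊗ₜ[k] one y) ⊗ₜ[k] u) = u := by
  induction u using TensorProduct.induction_on with
  | zero => simp
  | tmul a b => simp [one_mul']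
  | add u1 u2 h1 h2 => simp only [tmul_add, map_add, h1, h2]

lemma assocW (x y : X)
    (mul_assoc' : ∀ x y z w (a : A x y) (b : A y z) (c : A z w),
      mul x z w (mul x y z a b) c = mul x y w a (mul y z w b c))
    (u : A y x ⊗[k] A y x) (v : A x y ⊗[k] A x y) (w : A y x ⊗[k] A y x) :
    tmap (mul y x x) (mul y x x) (u ⊗ₜ[k] (tmap (mul x y x) (mul x y x) (v ⊗ₜ[k] w)))
      = tmap (mul y y x) (mul y y x)
          ((tmap (mul y x y) (mul y x y) (u ⊗ₜ[k] v)) ⊗ₜ[k] w) := by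
  induction u using TensorProduct.induction_on with
  | zero => simp
  | tmul u1 u2 =>
      induction v using TensorProduct.induction_on with
      | zero => simp
      | tmul v1 v2 =>
          induction w using TensorProduct.induction_on with
          | zero => simp
          | tmul w1 w2 => simp [mul_assoc']
          | add w1 w2 h1 h2 => simp only [tmul_add, map_add, h1, h2]
      | add v1 v2 h1 h2 =>
          simp only [tmul_add, add_tmul, map_add, h1, h2]
  | add u1 u2 h1 h2 => simp only [add_tmul, map_add, h1, h2, tmul_add]

lemma innerEval (x y : X)
    (Δ_mul : ∀ x y z (a : A x y) (b : A y z),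
      Δ x z (mul x y z a b)
        = (TensorProduct.map (TensorProduct.lift (mul x y z)) (TensorProduct.lift (mul x y z)))
            ((TensorProduct.tensorTensorTensorComm k (A x y) (A x y) (A y z) (A y z))
              ((Δ x y a) ⊗ₜ[k] (Δ y z b))))
    (Δ_one : ∀ x, Δ x x (one x) = (one x) ⊗ₜ[k] (one x))
    (S_left : ∀ x y (h : A x y),
      (TensorProduct.lift (mul x y x)) ((TensorProduct.map LinearMap.id (S x y)) (Δ x y h))
        = ε x y h • one x)
    (b : A x y) :
    tmap (mul x y x) (mul x y x)
        ((TensorProduct.map (Δ x y) ((Δ y x) ∘ₗ (S x y))) (Δ x y b))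
      = ε x y b • (one x ⊗ₜ[k] one x) := by
  have h1 : ∀ t : A x y ⊗[k] A x y,
      tmap (mul x y x) (mul x y x) ((TensorProduct.map (Δ x y) ((Δ y x) ∘ₗ (S x y))) t)
        = Δ x x ((TensorProduct.lift (mul x y x)) ((TensorProduct.map LinearMap.id (S x y)) t)) := by
    intro t
    induction t using TensorProduct.induction_on with
    | zero => simp
    | tmul a c => simp [tmap, Δ_mul]
    | add t1 t2 h1 h2 => simp only [map_add, h1, h2]
  rw [h1 (Δ x y b), S_left, map_smul, Δ_one]

lemma VL (x y : X)
    (coassoc : ∀ x y (a : A x y),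
      (TensorProduct.assoc k (A x y) (A x y) (A x y))
          ((TensorProduct.map (Δ x y) LinearMap.id) (Δ x y a))
        = (TensorProduct.map LinearMap.id (Δ x y)) (Δ x y a))
    (counit_left : ∀ x y (a : A x y),
      (TensorProduct.lid k (A x y)) ((TensorProduct.map (ε x y) LinearMap.id) (Δ x y a)) = a)
    (S_right : ∀ x y (h : A x y),
      (TensorProduct.lift (mul y x y)) ((TensorProduct.map (S x y) LinearMap.id) (Δ x y h))
        = ε x y h • one y)
    (a : A x y) :
    tmap (mul y x y) (mul y x y)
        ((TensorProduct.map
            (((TensorProduct.comm k (A y x) (A y x)).toLinearMap ∘ₗ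
                TensorProduct.map (S x y) (S x y)) ∘ₗ (Δ x y))
            (Δ x y)) (Δ x y a))
      = ε x y a • (one y ⊗ₜ[k] one y) := by
  set CM : A x y ⊗[k] A x y →ₗ[k] A y x ⊗[k] A y x :=
    (TensorProduct.comm k (A y x) (A y x)).toLinearMap ∘ₗ TensorProduct.map (S x y) (S x y)
    with hCM
  set σR : A x y ⊗[k] A x y →ₗ[k] A y y := twl (S x y) (mul y x y) with hσR
  set Θ : A x y ⊗[k] ((A x y ⊗[k] A x y) ⊗[k] A x y) →ₗ[k] A y y ⊗[k] A y y :=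
    theta σR σR with hΘ
  -- c1 : pull out the left Δ
  have c1 : ∀ t : A x y ⊗[k] A x y,
      tmap (mul y x y) (mul y x y) ((TensorProduct.map (CM ∘ₗ (Δ x y)) (Δ x y)) t)
        = tmap (mul y x y) (mul y x y)
            ((TensorProduct.map CM (Δ x y)) ((TensorProduct.map (Δ x y) LinearMap.id) t)) := by
    intro t
    rw [HopfAux.map_map, LinearMap.comp_id]
  -- c2 : rebracket into theta form
  have c2 : ∀ u : A x y ⊗[k] (A x y ⊗[k] A x y),
      tmap (mul y x y) (mul y x y)
          ((TensorProduct.map CM (Δ x y)) ((TensorProduct.assoc k (A x y) (A x y) (A x y)).symm u))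
        = Θ ((TensorProduct.map LinearMap.id
                ((TensorProduct.assoc k (A x y) (A x y) (A x y)).symm.toLinearMap))
              ((TensorProduct.map LinearMap.id (TensorProduct.map LinearMap.id (Δ x y))) u)) := by
    intro u
    induction u using TensorProduct.induction_on with
    | zero => simp
    | tmul p w =>
        induction w using TensorProduct.induction_on with
        | zero => simp
        | tmul b c =>
            simp only [TensorProduct.map_tmul, LinearMap.id_coe, id_eq,
              TensorProduct.assoc_symm_tmul, LinearEquiv.coe_coe]
            generalize Δ x y c = V
            induction V using TensorProduct.induction_on with
            | zero => simp
            | tmul c1 c2 => simp [hΘ, hσR, hCM]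
            | add V1 V2 h1 h2 => simp only [tmul_add, map_add, h1, h2]
        | add w1 w2 h1 h2 => simp only [tmul_add, map_add, h1, h2]
    | add u1 u2 h1 h2 => simp only [map_add, h1, h2]
  -- c3 : collapse the middle pair with the antipode
  have c3 : ∀ u : A x y ⊗[k] (A x y ⊗[k] A x y),
      Θ ((TensorProduct.map LinearMap.id (TensorProduct.map (Δ x y) LinearMap.id)) u)
        = one y ⊗ₜ[k]
            (σR ((TensorProduct.map LinearMap.id
                ((TensorProduct.lid k (A x y)).toLinearMap ∘ₗ
                  TensorProduct.map (ε x y) LinearMap.id)) u)) := by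
    intro u
    induction u using TensorProduct.induction_on with
    | zero => simp
    | tmul p w =>
        induction w using TensorProduct.induction_on with
        | zero => simp
        | tmul b c =>
            simp only [TensorProduct.map_tmul, LinearMap.id_coe, id_eq, hΘ, theta_tmul,
              LinearMap.coe_comp, Function.comp_apply, LinearEquiv.coe_coe,
              TensorProduct.lid_tmul]
            have hb : σR (Δ x y b) = ε x y b • one y := by
              simpa [hσR, twl] using S_right x y b
            rw [hb, smul_tmul]
            simp [tmul_smul]
        | add w1 w2 h1 h2 => simp only [tmul_add, map_add, h1, h2]
    | add u1 u2 h1 h2 => simp only [map_add, h1, h2, tmul_add]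
  -- assembly
  have hco : (TensorProduct.map (Δ x y) LinearMap.id) (Δ x y a)
      = (TensorProduct.assoc k (A x y) (A x y) (A x y)).symm
          ((TensorProduct.map LinearMap.id (Δ x y)) (Δ x y a)) := by
    rw [← coassoc x y a]; simp
  rw [c1, hco, c2]
  have e1 : (TensorProduct.map LinearMap.id
        ((TensorProduct.assoc k (A x y) (A x y) (A x y)).symm.toLinearMap))
        ((TensorProduct.map LinearMap.id (TensorProduct.map LinearMap.id (Δ x y)))
          ((TensorProduct.map LinearMap.id (Δ x y)) (Δ x y a)))
      = (TensorProduct.map LinearMap.id (TensorProduct.map (Δ x y) LinearMap.id))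
          ((TensorProduct.map LinearMap.id (Δ x y)) (Δ x y a)) := by
    rw [HopfAux.map_map, HopfAux.map_map, HopfAux.map_map]
    have hfun : ((TensorProduct.map (Δ x y) LinearMap.id).comp (Δ x y))
        = (TensorProduct.assoc k (A x y) (A x y) (A x y)).symm.toLinearMap.comp
            ((TensorProduct.map LinearMap.id (Δ x y)).comp (Δ x y)) :=
      LinearMap.ext fun b => by
        simp only [LinearMap.comp_apply, LinearEquiv.coe_coe]
        rw [← coassoc x y b]; simp
    rw [hfun]
    simp only [LinearMap.id_comp, LinearMap.comp_id, LinearMap.comp_assoc]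
  rw [e1, c3]
  have e2 : (TensorProduct.map LinearMap.id
        ((TensorProduct.lid k (A x y)).toLinearMap ∘ₗ TensorProduct.map (ε x y) LinearMap.id))
        ((TensorProduct.map LinearMap.id (Δ x y)) (Δ x y a)) = Δ x y a := by
    rw [HopfAux.map_map]
    have hfun2 : (((TensorProduct.lid k (A x y)).toLinearMap ∘ₗ
          TensorProduct.map (ε x y) LinearMap.id).comp (Δ x y)) = LinearMap.id :=
      LinearMap.ext fun b => by simpa using counit_left x y b
    rw [hfun2]
    simp [TensorProduct.map_id]
  rw [e2]
  have hb : σR (Δ x y a) = ε x y a • one y := by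
    simpa [hσR, twl] using S_right x y a
  rw [hb, tmul_smul]

lemma DS (x y : X)
    (coassoc : ∀ x y (a : A x y),
      (TensorProduct.assoc k (A x y) (A x y) (A x y))
          ((TensorProduct.map (Δ x y) LinearMap.id) (Δ x y a))
        = (TensorProduct.map LinearMap.id (Δ x y)) (Δ x y a))
    (counit_left : ∀ x y (a : A x y),
      (TensorProduct.lid k (A x y)) ((TensorProduct.map (ε x y) LinearMap.id) (Δ x y a)) = a)
    (counit_right : ∀ x y (a : A x y),
      (TensorProduct.rid k (A x y)) ((TensorProduct.map LinearMap.id (ε x y)) (Δ x y a)) = a)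
    (mul_assoc' : ∀ x y z w (a : A x y) (b : A y z) (c : A z w),
      mul x z w (mul x y z a b) c = mul x y w a (mul y z w b c))
    (one_mul' : ∀ x y (a : A x y), mul x x y (one x) a = a)
    (mul_one' : ∀ x y (a : A x y), mul x y y a (one y) = a)
    (Δ_mul : ∀ x y z (a : A x y) (b : A y z),
      Δ x z (mul x y z a b)
        = (TensorProduct.map (TensorProduct.lift (mul x y z)) (TensorProduct.lift (mul x y z)))
            ((TensorProduct.tensorTensorTensorComm k (A x y) (A x y) (A y z) (A y z))
              ((Δ x y a) ⊗ₜ[k] (Δ y z b))))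
    (Δ_one : ∀ x, Δ x x (one x) = (one x) ⊗ₜ[k] (one x))
    (S_left : ∀ x y (h : A x y),
      (TensorProduct.lift (mul x y x)) ((TensorProduct.map LinearMap.id (S x y)) (Δ x y h))
        = ε x y h • one x)
    (S_right : ∀ x y (h : A x y),
      (TensorProduct.lift (mul y x y)) ((TensorProduct.map (S x y) LinearMap.id) (Δ x y h))
        = ε x y h • one y)
    (h : A x y) :
    Δ y x (S x y h)
      = (TensorProduct.comm k (A y x) (A y x))
          (TensorProduct.map (S x y) (S x y) (Δ x y h)) := by
  set Fmap : A x y →ₗ[k] A y x ⊗[k] A y x := (Δ y x) ∘ₗ (S x y) with hF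
  set CM : A x y ⊗[k] A x y →ₗ[k] A y x ⊗[k] A y x :=
    (TensorProduct.comm k (A y x) (A y x)).toLinearMap ∘ₗ TensorProduct.map (S x y) (S x y)
    with hCM
  set Gmap : A x y →ₗ[k] A y x ⊗[k] A y x := CM ∘ₗ Δ x y with hG
  set Inner : A x y ⊗[k] A x y →ₗ[k] A x x ⊗[k] A x x :=
    tmap (mul x y x) (mul x y x) ∘ₗ TensorProduct.map (Δ x y) Fmap with hInner
  -- right evaluation : W = Gmap h
  have stepR : ∀ t : A x y ⊗[k] A x y,
      tmap (mul y x x) (mul y x x)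
          ((TensorProduct.map Gmap Inner) ((TensorProduct.map LinearMap.id (Δ x y)) t))
        = Gmap ((TensorProduct.rid k (A x y)) ((TensorProduct.map LinearMap.id (ε x y)) t)) := by
    intro t
    induction t using TensorProduct.induction_on with
    | zero => simp
    | tmul kk l =>
        simp only [TensorProduct.map_tmul, LinearMap.id_coe, id_eq,
          TensorProduct.rid_tmul, map_smul]
        have hi : Inner (Δ x y l) = ε x y l • (one x ⊗ₜ[k] one x) := by
          rw [hInner, LinearMap.comp_apply]
          exact innerEval A Δ ε mul one S x y Δ_mul Δ_one S_left l
        rw [hi, tmul_smul, map_smul, unit_right A mul one x y mul_one' (Gmap kk)]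
    | add t1 t2 h1 h2 => simp only [map_add, h1, h2]
  have hR : tmap (mul y x x) (mul y x x)
      ((TensorProduct.map Gmap Inner)
        ((TensorProduct.map LinearMap.id (Δ x y)) (Δ x y h))) = Gmap h := by
    rw [stepR (Δ x y h), counit_right x y h]
  -- left evaluation : W = Fmap h
  have regroup : ∀ t : A x y ⊗[k] (A x y ⊗[k] A x y),
      tmap (mul y x x) (mul y x x) ((TensorProduct.map Gmap Inner) t)
        = tmap (mul y y x) (mul y y x)
            ((TensorProduct.map
                (tmap (mul y x y) (mul y x y) ∘ₗ TensorProduct.map Gmap (Δ x y)) Fmap)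
              ((TensorProduct.assoc k (A x y) (A x y) (A x y)).symm t)) := by
    intro t
    induction t using TensorProduct.induction_on with
    | zero => simp
    | tmul kk w =>
        induction w using TensorProduct.induction_on with
        | zero => simp
        | tmul b c =>
            simp only [TensorProduct.map_tmul, TensorProduct.assoc_symm_tmul,
              LinearMap.comp_apply, hInner]
            rw [assocW A mul x y mul_assoc' (Gmap kk) (Δ x y b) (Fmap c)]
        | add w1 w2 h1 h2 => simp only [tmul_add, map_add, h1, h2]
    | add t1 t2 h1 h2 => simp only [map_add, h1, h2]
  have hcs : (TensorProduct.assoc k (A x y) (A x y) (A x y)).symm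
        ((TensorProduct.map LinearMap.id (Δ x y)) (Δ x y h))
      = (TensorProduct.map (Δ x y) LinearMap.id) (Δ x y h) := by
    rw [← coassoc x y h]; simp
  have stepL : ∀ t : A x y ⊗[k] A x y,
      tmap (mul y y x) (mul y y x)
          ((TensorProduct.map
              (tmap (mul y x y) (mul y x y) ∘ₗ TensorProduct.map Gmap (Δ x y)) Fmap)
            ((TensorProduct.map (Δ x y) LinearMap.id) t))
        = Fmap ((TensorProduct.lid k (A x y)) ((TensorProduct.map (ε x y) LinearMap.id) t)) := by
    intro t
    induction t using TensorProduct.induction_on with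
    | zero => simp
    | tmul kk l =>
        simp only [TensorProduct.map_tmul, LinearMap.id_coe, id_eq,
          TensorProduct.lid_tmul, map_smul, LinearMap.comp_apply]
        have hv : tmap (mul y x y) (mul y x y)
            ((TensorProduct.map Gmap (Δ x y)) (Δ x y kk)) = ε x y kk • (one y ⊗ₜ[k] one y) := by
          rw [hG]
          exact VL A Δ ε mul one S x y coassoc counit_left S_right kk
        rw [hv, ← smul_tmul', map_smul, unit_left A mul one x y one_mul' (Fmap l)]
    | add t1 t2 h1 h2 => simp only [map_add, h1, h2]
  have hL : tmap (mul y x x) (mul y x x)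
      ((TensorProduct.map Gmap Inner)
        ((TensorProduct.map LinearMap.id (Δ x y)) (Δ x y h))) = Fmap h := by
    rw [regroup, hcs, stepL (Δ x y h), counit_left x y h]
  have := hL.symm.trans hR
  simpa [hF, hG, hCM] using this

variable (M : X → X → Type*)
  [∀ x y, AddCommGroup (M x y)] [∀ x y, Module k (M x y)]
  (ψ : ∀ x y z, M x y →ₗ[k] A y z →ₗ[k] M x z)
  (ρ : ∀ x y, M x y →ₗ[k] M x y ⊗[k] A x y)

lemma coinv (x y : X)
    (coassoc : ∀ x y (a : A x y),
      (TensorProduct.assoc k (A x y) (A x y) (A x y))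
          ((TensorProduct.map (Δ x y) LinearMap.id) (Δ x y a))
        = (TensorProduct.map LinearMap.id (Δ x y)) (Δ x y a))
    (counit_left : ∀ x y (a : A x y),
      (TensorProduct.lid k (A x y)) ((TensorProduct.map (ε x y) LinearMap.id) (Δ x y a)) = a)
    (counit_right : ∀ x y (a : A x y),
      (TensorProduct.rid k (A x y)) ((TensorProduct.map LinearMap.id (ε x y)) (Δ x y a)) = a)
    (mul_assoc' : ∀ x y z w (a : A x y) (b : A y z) (c : A z w),
      mul x z w (mul x y z a b) c = mul x y w a (mul y z w b c))
    (one_mul' : ∀ x y (a : A x y), mul x x y (one x) a = a)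
    (mul_one' : ∀ x y (a : A x y), mul x y y a (one y) = a)
    (Δ_mul : ∀ x y z (a : A x y) (b : A y z),
      Δ x z (mul x y z a b)
        = (TensorProduct.map (TensorProduct.lift (mul x y z)) (TensorProduct.lift (mul x y z)))
            ((TensorProduct.tensorTensorTensorComm k (A x y) (A x y) (A y z) (A y z))
              ((Δ x y a) ⊗ₜ[k] (Δ y z b))))
    (Δ_one : ∀ x, Δ x x (one x) = (one x) ⊗ₜ[k] (one x))
    (S_left : ∀ x y (h : A x y),
      (TensorProduct.lift (mul x y x)) ((TensorProduct.map LinearMap.id (S x y)) (Δ x y h))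
        = ε x y h • one x)
    (S_right : ∀ x y (h : A x y),
      (TensorProduct.lift (mul y x y)) ((TensorProduct.map (S x y) LinearMap.id) (Δ x y h))
        = ε x y h • one y)
    (ρ_coassoc : ∀ x y (m : M x y),
      (TensorProduct.map (ρ x y) LinearMap.id) (ρ x y m)
        = (TensorProduct.assoc k (M x y) (A x y) (A x y)).symm
            ((TensorProduct.map LinearMap.id (Δ x y)) (ρ x y m)))
    (ρ_compat : ∀ x y z (m : M x y) (a : A y z),
      ρ x z (ψ x y z m a)
        = (TensorProduct.map (TensorProduct.lift (ψ x y z)) (TensorProduct.lift (mul x y z)))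
            ((TensorProduct.tensorTensorTensorComm k (M x y) (A x y) (A y z) (A y z))
              ((ρ x y m) ⊗ₜ[k] (Δ y z a))))
    (m : M x y) :
    ρ x x ((TensorProduct.lift (ψ x y x)) ((TensorProduct.map LinearMap.id (S x y)) (ρ x y m)))
      = ((TensorProduct.lift (ψ x y x)) ((TensorProduct.map LinearMap.id (S x y)) (ρ x y m)))
          ⊗ₜ[k] one x := by
  set CM : A x y ⊗[k] A x y →ₗ[k] A y x ⊗[k] A y x :=
    (TensorProduct.comm k (A y x) (A y x)).toLinearMap ∘ₗ TensorProduct.map (S x y) (S x y)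
    with hCM
  have DSfun : (Δ y x) ∘ₗ (S x y) = CM ∘ₗ (Δ x y) := by
    apply LinearMap.ext
    intro b
    simp only [LinearMap.comp_apply, hCM, LinearEquiv.coe_coe]
    exact DS A Δ ε mul one S x y coassoc counit_left counit_right mul_assoc' one_mul'
      mul_one' Δ_mul Δ_one S_left S_right b
  -- step 1 : compatibility
  have s1 : ∀ t : M x y ⊗[k] A x y,
      ρ x x (twr (ψ x y x) (S x y) t)
        = tmap (ψ x y x) (mul x y x)
            ((TensorProduct.map (ρ x y) ((Δ y x) ∘ₗ (S x y))) t) := by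
    intro t
    induction t using TensorProduct.induction_on with
    | zero => simp
    | tmul m0 a =>
        simp only [twr_tmul, TensorProduct.map_tmul, LinearMap.comp_apply]
        rw [ρ_compat x y x m0 (S x y a)]
        simp [tmap]
    | add t1 t2 h1 h2 => simp only [map_add, h1, h2]
  -- step 8 : structural identity
  have s8 : ∀ t : M x y ⊗[k] ((A x y ⊗[k] A x y) ⊗[k] A x y),
      tmap (ψ x y x) (mul x y x)
          ((TensorProduct.map LinearMap.id CM)
            ((TensorProduct.assoc k (M x y) (A x y) (A x y ⊗[k] A x y)).symm
              ((TensorProduct.map LinearMap.id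
                  (TensorProduct.assoc k (A x y) (A x y) (A x y)).toLinearMap) t)))
        = theta' (twr (ψ x y x) (S x y)) (twr (mul x y x) (S x y)) t := by
    intro t
    induction t using TensorProduct.induction_on with
    | zero => simp
    | tmul m0 v =>
        induction v using TensorProduct.induction_on with
        | zero => simp
        | tmul w c =>
            induction w using TensorProduct.induction_on with
            | zero => simp
            | tmul h1 h2 => simp [hCM]
            | add w1 w2 g1 g2 => simp only [add_tmul, tmul_add, map_add, g1, g2]
        | add v1 v2 g1 g2 => simp only [tmul_add, map_add, g1, g2]
    | add t1 t2 g1 g2 => simp only [map_add, g1, g2]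
  -- step 10 : final collapse
  have s10 : ∀ t : M x y ⊗[k] A x y,
      theta' (twr (ψ x y x) (S x y)) (twr (mul x y x) (S x y))
          ((TensorProduct.map LinearMap.id
              ((TensorProduct.map (Δ x y) LinearMap.id) ∘ₗ (Δ x y))) t)
        = (twr (ψ x y x) (S x y)) t ⊗ₜ[k] one x := by
    intro t
    induction t using TensorProduct.induction_on with
    | zero => simp
    | tmul m0 h =>
        simp only [TensorProduct.map_tmul, LinearMap.id_coe, id_eq, LinearMap.comp_apply]
        have sub : ∀ w : A x y ⊗[k] A x y,
            theta' (twr (ψ x y x) (S x y)) (twr (mul x y x) (S x y))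
                (m0 ⊗ₜ[k] ((TensorProduct.map (Δ x y) LinearMap.id) w))
              = (twr (ψ x y x) (S x y))
                  (m0 ⊗ₜ[k] ((TensorProduct.lid k (A x y))
                    ((TensorProduct.map (ε x y) LinearMap.id) w))) ⊗ₜ[k] one x := by
          intro w
          induction w using TensorProduct.induction_on with
          | zero => simp
          | tmul kk c =>
              simp only [TensorProduct.map_tmul, LinearMap.id_coe, id_eq, theta'_tmul,
                TensorProduct.lid_tmul]
              have hk : twr (mul x y x) (S x y) (Δ x y kk) = ε x y kk • one x := by
                simpa [twr] using S_left x y kk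
              rw [hk, tmul_smul, tmul_smul, map_smul, smul_tmul']
          | add w1 w2 g1 g2 => simp only [tmul_add, map_add, g1, g2, add_tmul]
        rw [sub (Δ x y h), counit_left x y h]
    | add t1 t2 g1 g2 => simp only [map_add, g1, g2, add_tmul]
  -- assembly
  have key : ρ x x (twr (ψ x y x) (S x y) (ρ x y m))
      = twr (ψ x y x) (S x y) (ρ x y m) ⊗ₜ[k] one x := by
    rw [s1 (ρ x y m)]
    have e1 : (TensorProduct.map (ρ x y) ((Δ y x) ∘ₗ (S x y))) (ρ x y m)
        = (TensorProduct.map LinearMap.id CM)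
            ((TensorProduct.assoc k (M x y) (A x y) (A x y ⊗[k] A x y)).symm
              ((TensorProduct.map LinearMap.id
                  (TensorProduct.assoc k (A x y) (A x y) (A x y)).toLinearMap)
                ((TensorProduct.map LinearMap.id
                    (TensorProduct.map (Δ x y) LinearMap.id))
                  ((TensorProduct.map LinearMap.id (Δ x y)) (ρ x y m))))) := by
      have a1 : (TensorProduct.map (ρ x y) ((Δ y x) ∘ₗ (S x y))) (ρ x y m)
          = (TensorProduct.map LinearMap.id ((Δ y x) ∘ₗ (S x y)))
              ((TensorProduct.map (ρ x y) LinearMap.id) (ρ x y m)) := by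
        rw [HopfAux.map_map]
        simp only [LinearMap.comp_id, LinearMap.id_comp]
      rw [a1, ρ_coassoc x y m, DSfun]
      have a2 : (TensorProduct.map LinearMap.id (CM ∘ₗ (Δ x y)))
            ((TensorProduct.assoc k (M x y) (A x y) (A x y)).symm
              ((TensorProduct.map LinearMap.id (Δ x y)) (ρ x y m)))
          = (TensorProduct.map LinearMap.id CM)
              ((TensorProduct.map LinearMap.id (Δ x y))
                ((TensorProduct.assoc k (M x y) (A x y) (A x y)).symm
                  ((TensorProduct.map LinearMap.id (Δ x y)) (ρ x y m)))) := by
        rw [HopfAux.map_map]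
        simp only [LinearMap.comp_id, LinearMap.id_comp]
      rw [a2, map_assoc_symm]
      congr 1
      -- remains : map id (map id Δ) u = map id assoc (map id (map Δ id) u)  for u = map id Δ (ρ m)
      rw [HopfAux.map_map, HopfAux.map_map, HopfAux.map_map]
      have hfun : (TensorProduct.map LinearMap.id (Δ x y)).comp (Δ x y)
          = (TensorProduct.assoc k (A x y) (A x y) (A x y)).toLinearMap.comp
              ((TensorProduct.map (Δ x y) LinearMap.id).comp (Δ x y)) :=
        LinearMap.ext fun b => by
          simp only [LinearMap.comp_apply, LinearEquiv.coe_coe]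
          rw [coassoc x y b]
      rw [hfun]
      simp only [LinearMap.id_comp, LinearMap.comp_id, LinearMap.comp_assoc]
    rw [e1, s8]
    have e2 : (TensorProduct.map LinearMap.id (TensorProduct.map (Δ x y) LinearMap.id))
          ((TensorProduct.map LinearMap.id (Δ x y)) (ρ x y m))
        = (TensorProduct.map LinearMap.id
            ((TensorProduct.map (Δ x y) LinearMap.id) ∘ₗ (Δ x y))) (ρ x y m) := by
      rw [HopfAux.map_map]
      simp only [LinearMap.id_comp]
    rw [e2, s10 (ρ x y m)]
  simpa [twr] using key

end HopfCat



theorem hopf_module_coinvariant_element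
    {k : Type*} [CommRing k] {X : Type*}
    (A : X → X → Type*)
    [∀ x y, AddCommGroup (A x y)] [∀ x y, Module k (A x y)]
    (Δ : ∀ x y, A x y →ₗ[k] A x y ⊗[k] A x y)
    (ε : ∀ x y, A x y →ₗ[k] k)
    (mul : ∀ x y z, A x y →ₗ[k] A y z →ₗ[k] A x z)
    (one : ∀ x, A x x)
    (coassoc : ∀ x y (a : A x y),
      (TensorProduct.assoc k (A x y) (A x y) (A x y))
          ((TensorProduct.map (Δ x y) LinearMap.id) (Δ x y a))
        = (TensorProduct.map LinearMap.id (Δ x y)) (Δ x y a))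
    (counit_left : ∀ x y (a : A x y),
      (TensorProduct.lid k (A x y)) ((TensorProduct.map (ε x y) LinearMap.id) (Δ x y a)) = a)
    (counit_right : ∀ x y (a : A x y),
      (TensorProduct.rid k (A x y)) ((TensorProduct.map LinearMap.id (ε x y)) (Δ x y a)) = a)
    (mul_assoc' : ∀ x y z w (a : A x y) (b : A y z) (c : A z w),
      mul x z w (mul x y z a b) c = mul x y w a (mul y z w b c))
    (one_mul' : ∀ x y (a : A x y), mul x x y (one x) a = a)
    (mul_one' : ∀ x y (a : A x y), mul x y y a (one y) = a)
    (Δ_mul : ∀ x y z (a : A x y) (b : A y z),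
      Δ x z (mul x y z a b)
        = (TensorProduct.map (TensorProduct.lift (mul x y z)) (TensorProduct.lift (mul x y z)))
            ((TensorProduct.tensorTensorTensorComm k (A x y) (A x y) (A y z) (A y z))
              ((Δ x y a) ⊗ₜ[k] (Δ y z b))))
    (ε_mul : ∀ x y z (a : A x y) (b : A y z),
      ε x z (mul x y z a b) = ε x y a * ε y z b)
    (Δ_one : ∀ x, Δ x x (one x) = (one x) ⊗ₜ[k] (one x))
    (ε_one : ∀ x, ε x x (one x) = 1)
    (S : ∀ x y, A x y →ₗ[k] A y x)
    (S_left : ∀ x y (h : A x y),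
      (TensorProduct.lift (mul x y x)) ((TensorProduct.map LinearMap.id (S x y)) (Δ x y h))
        = ε x y h • one x)
    (S_right : ∀ x y (h : A x y),
      (TensorProduct.lift (mul y x y)) ((TensorProduct.map (S x y) LinearMap.id) (Δ x y h))
        = ε x y h • one y)
    (M : X → X → Type*)
    [∀ x y, AddCommGroup (M x y)] [∀ x y, Module k (M x y)]
    (ψ : ∀ x y z, M x y →ₗ[k] A y z →ₗ[k] M x z)
    (ψ_assoc : ∀ x y z w (m : M x y) (a : A y z) (b : A z w),
      ψ x z w (ψ x y z m a) b = ψ x y w m (mul y z w a b))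
    (ψ_one : ∀ x y (m : M x y), ψ x y y m (one y) = m)
    (ρ : ∀ x y, M x y →ₗ[k] M x y ⊗[k] A x y)
    (ρ_coassoc : ∀ x y (m : M x y),
      (TensorProduct.map (ρ x y) LinearMap.id) (ρ x y m)
        = (TensorProduct.assoc k (M x y) (A x y) (A x y)).symm
            ((TensorProduct.map LinearMap.id (Δ x y)) (ρ x y m)))
    (ρ_counit : ∀ x y (m : M x y),
      (TensorProduct.rid k (M x y)) ((TensorProduct.map LinearMap.id (ε x y)) (ρ x y m)) = m)
    (ρ_compat : ∀ x y z (m : M x y) (a : A y z),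
      ρ x z (ψ x y z m a)
        = (TensorProduct.map (TensorProduct.lift (ψ x y z)) (TensorProduct.lift (mul x y z)))
            ((TensorProduct.tensorTensorTensorComm k (M x y) (A x y) (A y z) (A y z))
              ((ρ x y m) ⊗ₜ[k] (Δ y z a))))
 :
    ∀ x y (m : M x y),
      ρ x x ((TensorProduct.lift (ψ x y x)) ((TensorProduct.map LinearMap.id (S x y)) (ρ x y m)))
        = ((TensorProduct.lift (ψ x y x)) ((TensorProduct.map LinearMap.id (S x y)) (ρ x y m)))
            ⊗ₜ[k] one x := by
  intro x y m
  exact HopfCat.coinv A Δ ε mul one S M ψ ρ x y coassoc counit_left counit_right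
    mul_assoc' one_mul' mul_one' Δ_mul Δ_one S_left S_right ρ_coassoc ρ_compat m
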